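/- Let D = (X,Y,E) be a homogeneous 2-partite digraph and v a vertex with N⁺(v) and N⁻(v) infinite and v^⊥ finite. Then v^⊥ = ∅. -/

import Mathlib

/-- A 2-partite digraph `D = (X, Y, E)`: `X` and `Y` are disjoint sets covering the
vertex set, every edge goes between the two sides, and no two opposite edges exist. -/
structure TwoPartiteDigraph (V : Type*) where
  X : Set V
  Y : Set V
  cover : X ∪ Y = Set.univ
  disj : Disjoint X Y
  E : V → V → Prop
  mem_of_edge : ∀ u v, E u v → (u ∈ X ∧ v ∈ Y) ∨ (u ∈ Y ∧ v ∈ X)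
  not_opposite : ∀ u v, E u v → ¬ E v u

namespace TwoPartiteDigraph

variable {V V₁ V₂ : Type*}

/-- Out-neighbourhood (successors). -/
def Nplus (D : TwoPartiteDigraph V) (v : V) : Set V := {w | D.E v w}

/-- In-neighbourhood (predecessors). -/
def Nminus (D : TwoPartiteDigraph V) (v : V) : Set V := {w | D.E w v}

/-- Adjacency in the underlying undirected bipartite graph. -/
def Adj (D : TwoPartiteDigraph V) (u v : V) : Prop := D.E u v ∨ D.E v u

/-- `v^⊥`: the vertices on the other side not adjacent to `v`. -/
def perp (D : TwoPartiteDigraph V) (v : V) : Set V :=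
  {w | ((v ∈ D.X ∧ w ∈ D.Y) ∨ (v ∈ D.Y ∧ w ∈ D.X)) ∧ ¬ D.Adj v w}

/-- `D` is bipartite if all edges go from `X` to `Y`, or all from `Y` to `X`. -/
def Bipartite (D : TwoPartiteDigraph V) : Prop :=
  (∀ u v, D.E u v → u ∈ D.X) ∨ (∀ u v, D.E u v → u ∈ D.Y)

/-- `φ` is an isomorphism between the subdigraphs induced on `A` and on `φ '' A`,
respecting the bipartition. -/
def IsPartialIso (D : TwoPartiteDigraph V) (A : Set V) (φ : V → V) : Prop :=
  Set.InjOn φ A ∧ (∀ a ∈ A, (a ∈ D.X ↔ φ a ∈ D.X)) ∧ (∀ a ∈ A, (a ∈ D.Y ↔ φ a ∈ D.Y)) ∧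
  ∀ a ∈ A, ∀ b ∈ A, (D.E a b ↔ D.E (φ a) (φ b))

/-- A bipartition-preserving automorphism of `D`. -/
def IsAuto (D : TwoPartiteDigraph V) (α : Equiv.Perm V) : Prop :=
  (∀ v, v ∈ D.X ↔ α v ∈ D.X) ∧ (∀ v, v ∈ D.Y ↔ α v ∈ D.Y) ∧
  ∀ u v, D.E u v ↔ D.E (α u) (α v)

/-- `D` is homogeneous: every isomorphism between finite induced subdigraphs respecting
the bipartition extends to a bipartition-preserving automorphism of `D`. -/
def Homogeneous (D : TwoPartiteDigraph V) : Prop :=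
  ∀ A : Set V, A.Finite → ∀ φ : V → V, D.IsPartialIso A φ →
    ∃ α : Equiv.Perm V, D.IsAuto α ∧ ∀ a ∈ A, α a = φ a

/-- The underlying undirected bipartite graph is complete bipartite. -/
def CompleteBip (D : TwoPartiteDigraph V) : Prop := ∀ x ∈ D.X, ∀ y ∈ D.Y, D.Adj x y

/-- `D` is a generic 2-partite digraph. -/
def IsGeneric (D : TwoPartiteDigraph V) : Prop :=
  D.CompleteBip ∧
  ∀ AX BX : Set V, AX.Finite → BX.Finite → AX ⊆ D.X → BX ⊆ D.X → Disjoint AX BX →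
  ∀ AY BY : Set V, AY.Finite → BY.Finite → AY ⊆ D.Y → BY ⊆ D.Y → Disjoint AY BY →
    (∃ y ∈ D.Y, AX ⊆ D.Nplus y ∧ BX ⊆ D.Nminus y) ∧
    (∃ x ∈ D.X, AY ⊆ D.Nplus x ∧ BY ⊆ D.Nminus x)

/-- `D` is a generic orientation of a generic bipartite graph. -/
def IsGenericOrientation (D : TwoPartiteDigraph V) : Prop :=
  ∀ AX BX CX : Set V, AX.Finite → BX.Finite → CX.Finite →
    AX ⊆ D.X → BX ⊆ D.X → CX ⊆ D.X →
    Disjoint AX BX → Disjoint AX CX → Disjoint BX CX →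
  ∀ AY BY CY : Set V, AY.Finite → BY.Finite → CY.Finite →
    AY ⊆ D.Y → BY ⊆ D.Y → CY ⊆ D.Y →
    Disjoint AY BY → Disjoint AY CY → Disjoint BY CY →
    (∃ y ∈ D.Y, AX ⊆ D.Nplus y ∧ BX ⊆ D.Nminus y ∧ CX ⊆ D.perp y) ∧
    (∃ x ∈ D.X, AY ⊆ D.Nplus x ∧ BY ⊆ D.Nminus x ∧ CY ⊆ D.perp x)

/-- `D` is (a copy of) `M_κ` with the matching oriented from `X` to `Y`:
there is a bijection `m : X → Y` such that the edges from `X` to `Y` form the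
perfect matching `{(x, m x)}` and the edges from `Y` to `X` form its bipartite
complement. -/
def IsMFixed (D : TwoPartiteDigraph V) : Prop :=
  ∃ m : V → V, Set.BijOn m D.X D.Y ∧
    (∀ x ∈ D.X, ∀ y ∈ D.Y, (D.E x y ↔ y = m x)) ∧
    (∀ x ∈ D.X, ∀ y ∈ D.Y, (D.E y x ↔ y ≠ m x))

/-- `D` is (a copy of) `M_κ`: one of the two directed parts is a perfect matching and
the other is the bipartite complement of a perfect matching. -/
def IsM (D : TwoPartiteDigraph V) : Prop :=
  ∃ m : V → V, Set.BijOn m D.X D.Y ∧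
    ((∀ x ∈ D.X, ∀ y ∈ D.Y, (D.E x y ↔ y = m x) ∧ (D.E y x ↔ y ≠ m x)) ∨
     (∀ x ∈ D.X, ∀ y ∈ D.Y, (D.E y x ↔ y = m x) ∧ (D.E x y ↔ y ≠ m x)))

/-- Isomorphism of 2-partite digraphs respecting the bipartitions. -/
def Isomorphic (D₁ : TwoPartiteDigraph V₁) (D₂ : TwoPartiteDigraph V₂) : Prop :=
  ∃ e : V₁ ≃ V₂, (∀ v, v ∈ D₁.X ↔ e v ∈ D₂.X) ∧ (∀ v, v ∈ D₁.Y ↔ e v ∈ D₂.Y) ∧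
    ∀ u v, D₁.E u v ↔ D₂.E (e u) (e v)

/-- `φ` is an isomorphism of finite induced subgraphs of the underlying undirected
bipartite graph, respecting the bipartition. -/
def IsGraphPartialIso (D : TwoPartiteDigraph V) (A : Set V) (φ : V → V) : Prop :=
  Set.InjOn φ A ∧ (∀ a ∈ A, (a ∈ D.X ↔ φ a ∈ D.X)) ∧ (∀ a ∈ A, (a ∈ D.Y ↔ φ a ∈ D.Y)) ∧
  ∀ a ∈ A, ∀ b ∈ A, (D.Adj a b ↔ D.Adj (φ a) (φ b))

/-- The underlying undirected bipartite graph of `D` is homogeneous. -/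
def GraphHomogeneous (D : TwoPartiteDigraph V) : Prop :=
  ∀ A : Set V, A.Finite → ∀ φ : V → V, D.IsGraphPartialIso A φ →
    ∃ α : Equiv.Perm V, ((∀ v, v ∈ D.X ↔ α v ∈ D.X) ∧ (∀ v, v ∈ D.Y ↔ α v ∈ D.Y) ∧
      ∀ u v, D.Adj u v ↔ D.Adj (α u) (α v)) ∧ ∀ a ∈ A, α a = φ a

/-- The underlying undirected bipartite graph of `D` is generic. -/
def UnderlyingGeneric (D : TwoPartiteDigraph V) : Prop :=
  ∀ UX VX : Set V, UX.Finite → VX.Finite → UX ⊆ D.X → VX ⊆ D.X → Disjoint UX VX →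
  ∀ UY VY : Set V, UY.Finite → VY.Finite → UY ⊆ D.Y → VY ⊆ D.Y → Disjoint UY VY →
    (∃ y ∈ D.Y, (∀ u ∈ UX, D.Adj y u) ∧ ∀ v ∈ VX, ¬ D.Adj y v) ∧
    (∃ x ∈ D.X, (∀ u ∈ UY, D.Adj x u) ∧ ∀ v ∈ VY, ¬ D.Adj x v)

end TwoPartiteDigraph

open TwoPartiteDigraph

namespace TwoPartiteDigraph

variable {V : Type*} {D : TwoPartiteDigraph V}

lemma aux_not_edge {T : Set V} (hT : T = D.X ∨ T = D.Y) {a b : V}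
    (ha : a ∈ T) (hb : b ∈ T) : ¬ D.E a b := by
  intro h
  rcases D.mem_of_edge a b h with ⟨hx, hy⟩ | ⟨hy, hx⟩ <;> rcases hT with rfl | rfl
  · exact Set.disjoint_left.mp D.disj hb hy
  · exact Set.disjoint_left.mp D.disj hx ha
  · exact Set.disjoint_left.mp D.disj ha hy
  · exact Set.disjoint_left.mp D.disj hx hb

lemma aux_opp_mem {S T : Set V} (hST : (S = D.X ∧ T = D.Y) ∨ (S = D.Y ∧ T = D.X))
    {a b : V} (ha : a ∈ S) (h : D.E a b ∨ D.E b a) : b ∈ T := by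
  rcases h with h | h <;>
    rcases D.mem_of_edge _ _ h with ⟨h1, h2⟩ | ⟨h1, h2⟩ <;>
      rcases hST with ⟨rfl, rfl⟩ | ⟨rfl, rfl⟩
  · exact h2
  · exact (Set.disjoint_left.mp D.disj h1 ha).elim
  · exact (Set.disjoint_left.mp D.disj ha h1).elim
  · exact h2
  · exact (Set.disjoint_left.mp D.disj ha h2).elim
  · exact h1
  · exact h1
  · exact (Set.disjoint_left.mp D.disj h2 ha).elim

lemma aux_core (hhom : D.Homogeneous)
    {S T : Set V} (hST : (S = D.X ∧ T = D.Y) ∨ (S = D.Y ∧ T = D.X))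
    {p : V} (hp : p ∈ S) {A : Set V} (hA : A.Finite) (hAT : A ⊆ T)
    {φ : V → V} (hφT : ∀ a ∈ A, φ a ∈ T) (hinj : Set.InjOn φ A) :
    ∃ x ∈ S, ∀ a ∈ A, (D.E p a ↔ D.E x (φ a)) ∧ (D.E a p ↔ D.E (φ a) x) := by
  have hT : T = D.X ∨ T = D.Y := hST.elim (fun h => Or.inr h.2) (fun h => Or.inl h.2)
  have hiso : D.IsPartialIso A φ := by
    refine ⟨hinj, fun a ha => ?_, fun a ha => ?_, fun a ha b hb => ?_⟩
    · rcases hT with rfl | rfl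
      · exact iff_of_true (hAT ha) (hφT a ha)
      · exact iff_of_false (fun hx => Set.disjoint_left.mp D.disj hx (hAT ha))
          (fun hx => Set.disjoint_left.mp D.disj hx (hφT a ha))
    · rcases hT with rfl | rfl
      · exact iff_of_false (fun hy => Set.disjoint_left.mp D.disj (hAT ha) hy)
          (fun hy => Set.disjoint_left.mp D.disj (hφT a ha) hy)
      · exact iff_of_true (hAT ha) (hφT a ha)
    · exact iff_of_false (aux_not_edge hT (hAT ha) (hAT hb))
        (aux_not_edge hT (hφT a ha) (hφT b hb))
  obtain ⟨α, ⟨hX, hY, hE⟩, hfix⟩ := hhom A hA φ hiso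
  refine ⟨α p, ?_, fun a ha => ?_⟩
  · rcases hST with ⟨rfl, _⟩ | ⟨rfl, _⟩
    · exact (hX p).mp hp
    · exact (hY p).mp hp
  · constructor
    · rw [hE p a, hfix a ha]
    · rw [hE a p, hfix a ha]

lemma aux_main (hhom : D.Homogeneous)
    {S T : Set V} (hST : (S = D.X ∧ T = D.Y) ∨ (S = D.Y ∧ T = D.X))
    {v w : V} (hv : v ∈ S) (hw : w ∈ T) (hnadj : ¬ D.Adj v w)
    (hplus : (D.Nplus v).Infinite) (hminus : (D.Nminus v).Infinite)
    (hperp : (D.perp v).Finite) : False := by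
  classical
  have hST' : (T = D.X ∧ S = D.Y) ∨ (T = D.Y ∧ S = D.X) := by tauto
  have hEvw : ¬ D.E v w := fun h => hnadj (Or.inl h)
  have hEwv : ¬ D.E w v := fun h => hnadj (Or.inr h)
  have hNpT : ∀ u, D.E v u → u ∈ T := fun u hu => aux_opp_mem hST hv (Or.inl hu)
  have hNmT : ∀ u, D.E u v → u ∈ T := fun u hu => aux_opp_mem hST hv (Or.inr hu)
  -- Step A : Nplus w is nonempty
  obtain ⟨u', hu'⟩ := hminus.nonempty
  have hu'e : D.E u' v := hu'
  have hwu' : w ≠ u' := by rintro rfl; exact hEwv hu'e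
  have hA2 : ({w, u'} : Set V).Finite := (Set.finite_singleton u').insert w
  have hA2T : ({w, u'} : Set V) ⊆ T := by
    intro a ha
    simp only [Set.mem_insert_iff, Set.mem_singleton_iff] at ha
    rcases ha with rfl | rfl
    · exact hw
    · exact hNmT _ hu'e
  have hφ2T : ∀ a ∈ ({w, u'} : Set V), Equiv.swap w u' a ∈ T := by
    intro a ha
    simp only [Set.mem_insert_iff, Set.mem_singleton_iff] at ha
    rcases ha with rfl | rfl
    · rw [Equiv.swap_apply_left]; exact hNmT _ hu'e
    · rw [Equiv.swap_apply_right]; exact hw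
  obtain ⟨y₀, hy₀S, hy₀⟩ := aux_core hhom hST hv hA2 hA2T hφ2T
    (Equiv.injective _).injOn
  have hEwy₀ : D.E w y₀ := by
    have h := (hy₀ u' (by simp)).2.mp hu'e
    rwa [Equiv.swap_apply_right] at h
  have hvy₀ : v ≠ y₀ := by rintro rfl; exact hEwv hEwy₀
  -- Step B : Nminus w is infinite
  have hminw : (D.Nminus w).Infinite := by
    by_contra hB
    rw [Set.not_infinite] at hB
    obtain ⟨u₀, hu₀⟩ := hplus.nonempty
    have hu₀e : D.E v u₀ := hu₀
    obtain ⟨u₁, hu₁⟩ := (hplus.diff (Set.finite_singleton u₀)).nonempty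
    have hu₁e : D.E v u₁ := hu₁.1
    have hu₀u₁ : u₀ ≠ u₁ := by
      rintro rfl; exact hu₁.2 rfl
    obtain ⟨s, hs_sub, hs_card⟩ := hminus.exists_subset_card_eq (hB.toFinset.card + 1)
    have key : ∀ a : V, ∃ x : V, a ∈ s →
        x ∈ hB.toFinset ∧ D.E x a ∧ ∀ b ∈ s, b ≠ a → D.E b x := by
      intro a
      by_cases ha : a ∈ s
      swap
      · exact ⟨v, fun h => absurd h ha⟩
      have hav : D.E a v := hs_sub ha
      have haw : a ≠ w := by rintro rfl; exact hEwv hav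
      have hau₀ : a ≠ u₀ := by rintro rfl; exact D.not_opposite v a hu₀e hav
      have hau₁ : a ≠ u₁ := by rintro rfl; exact D.not_opposite v a hu₁e hav
      have hwu₀ : w ≠ u₀ := by rintro rfl; exact hEvw hu₀e
      have hwu₁ : w ≠ u₁ := by rintro rfl; exact hEvw hu₁e
      set e : Equiv.Perm V := (Equiv.swap u₁ a).trans (Equiv.swap w u₀) with he
      have hew : e u₀ = w := by
        simp only [he, Equiv.trans_apply]
        rw [Equiv.swap_apply_of_ne_of_ne hu₀u₁ (Ne.symm hau₀), Equiv.swap_apply_right]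
      have heu₁ : e u₁ = a := by
        simp only [he, Equiv.trans_apply]
        rw [Equiv.swap_apply_left, Equiv.swap_apply_of_ne_of_ne haw hau₀]
      have heww : e w = u₀ := by
        simp only [he, Equiv.trans_apply]
        rw [Equiv.swap_apply_of_ne_of_ne hwu₁ (Ne.symm haw), Equiv.swap_apply_left]
      have hea : e a = u₁ := by
        simp only [he, Equiv.trans_apply]
        rw [Equiv.swap_apply_right, Equiv.swap_apply_of_ne_of_ne hwu₁.symm hu₀u₁.symm]
      have heb : ∀ b ∈ s, b ≠ a → e b = b := by
        intro b hb hba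
        have hbv : D.E b v := hs_sub hb
        have hbw : b ≠ w := by rintro rfl; exact hEwv hbv
        have hbu₀ : b ≠ u₀ := by rintro rfl; exact D.not_opposite v b hu₀e hbv
        have hbu₁ : b ≠ u₁ := by rintro rfl; exact D.not_opposite v b hu₁e hbv
        simp only [he, Equiv.trans_apply]
        rw [Equiv.swap_apply_of_ne_of_ne hbu₁ hba, Equiv.swap_apply_of_ne_of_ne hbw hbu₀]
      have hAfin : (insert w (insert u₀ (insert u₁ (↑s : Set V)))).Finite :=
        (((s.finite_toSet).insert u₁).insert u₀).insert w
      have hAT : (insert w (insert u₀ (insert u₁ (↑s : Set V)))) ⊆ T := by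
        intro c hc
        simp only [Set.mem_insert_iff, Finset.mem_coe] at hc
        rcases hc with rfl | rfl | rfl | hc
        · exact hw
        · exact hNpT _ hu₀e
        · exact hNpT _ hu₁e
        · exact hNmT _ (hs_sub hc)
      have heT : ∀ c ∈ (insert w (insert u₀ (insert u₁ (↑s : Set V)))), e c ∈ T := by
        intro c hc
        simp only [Set.mem_insert_iff, Finset.mem_coe] at hc
        rcases hc with rfl | rfl | rfl | hc
        · rw [heww]; exact hNpT _ hu₀e
        · rw [hew]; exact hw
        · rw [heu₁]; exact hNmT _ hav
        · by_cases hca : c = a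
          · subst hca; rw [hea]; exact hNpT _ hu₁e
          · rw [heb c hc hca]; exact hNmT _ (hs_sub hc)
      obtain ⟨x, hxS, hx⟩ := aux_core hhom hST hv hAfin hAT heT (Equiv.injective _).injOn
      refine ⟨x, fun _ => ⟨?_, ?_, ?_⟩⟩
      · have h := (hx u₀ (by simp)).1.mp hu₀e
        rw [hew] at h
        exact hB.mem_toFinset.mpr h
      · have h := (hx u₁ (by simp)).1.mp hu₁e
        rwa [heu₁] at h
      · intro b hb hba
        have h := (hx b (by simp [hb])).2.mp (hs_sub hb)
        rwa [heb b hb hba] at h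
    choose f hf using key
    have hmaps : ∀ a ∈ s, f a ∈ hB.toFinset := fun a ha => (hf a ha).1
    have hlt : hB.toFinset.card < s.card := by rw [hs_card]; exact Nat.lt_succ_self _
    obtain ⟨a, ha, b, hb, hab, hfab⟩ :=
      Finset.exists_ne_map_eq_of_card_lt_of_maps_to hlt hmaps
    have h1 : D.E (f a) a := (hf a ha).2.1
    have h2 : D.E a (f b) := (hf b hb).2.2 a ha hab
    rw [← hfab] at h2
    exact D.not_opposite _ _ h1 h2
  -- Step C : pigeonhole into perp v
  obtain ⟨s, hs_sub, hs_card⟩ := hminw.exists_subset_card_eq (hperp.toFinset.card + 1)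
  have key : ∀ a : V, ∃ z : V, a ∈ s →
      z ∈ hperp.toFinset ∧ D.E z a ∧ ∀ b ∈ s, b ≠ a → D.E b z := by
    intro a
    by_cases ha : a ∈ s
    swap
    · exact ⟨v, fun h => absurd h ha⟩
    have haw : D.E a w := hs_sub ha
    have hav : a ≠ v := by rintro rfl; exact hEvw haw
    have hay₀ : a ≠ y₀ := by rintro rfl; exact D.not_opposite w a hEwy₀ haw
    set e : Equiv.Perm V := Equiv.swap y₀ a with he
    have hev : e v = v := Equiv.swap_apply_of_ne_of_ne hvy₀ (Ne.symm hav)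
    have hey₀ : e y₀ = a := Equiv.swap_apply_left _ _
    have hea : e a = y₀ := Equiv.swap_apply_right _ _
    have heb : ∀ b ∈ s, b ≠ a → e b = b := by
      intro b hb hba
      have hbw : D.E b w := hs_sub hb
      have hby₀ : b ≠ y₀ := by rintro rfl; exact D.not_opposite w b hEwy₀ hbw
      exact Equiv.swap_apply_of_ne_of_ne hby₀ hba
    have hAfin : (insert v (insert y₀ (↑s : Set V))).Finite :=
      ((s.finite_toSet).insert y₀).insert v
    have hAS : (insert v (insert y₀ (↑s : Set V))) ⊆ S := by
      intro c hc
      simp only [Set.mem_insert_iff, Finset.mem_coe] at hc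
      rcases hc with rfl | rfl | hc
      · exact hv
      · exact hy₀S
      · exact aux_opp_mem hST' hw (Or.inr (hs_sub hc))
    have heS : ∀ c ∈ (insert v (insert y₀ (↑s : Set V))), e c ∈ S := by
      intro c hc
      simp only [Set.mem_insert_iff, Finset.mem_coe] at hc
      rcases hc with rfl | rfl | hc
      · rw [hev]; exact hv
      · rw [hey₀]; exact aux_opp_mem hST' hw (Or.inr haw)
      · by_cases hca : c = a
        · subst hca; rw [hea]; exact hy₀S
        · rw [heb c hc hca]; exact aux_opp_mem hST' hw (Or.inr (hs_sub hc))
    obtain ⟨z, hzT, hz⟩ := aux_core hhom hST' hw hAfin hAS heS (Equiv.injective _).injOn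
    refine ⟨z, fun _ => ⟨?_, ?_, ?_⟩⟩
    · have h1 := (hz v (Set.mem_insert _ _)).1
      have h2 := (hz v (Set.mem_insert _ _)).2
      rw [hev] at h1 h2
      have hzperp : z ∈ D.perp v := by
        refine ⟨?_, ?_⟩
        · rcases hST with ⟨rfl, rfl⟩ | ⟨rfl, rfl⟩
          · exact Or.inl ⟨hv, hzT⟩
          · exact Or.inr ⟨hv, hzT⟩
        · rintro (h | h)
          · exact hEvw (h2.mpr h)
          · exact hEwv (h1.mpr h)
      simpa using hzperp
    · have h := (hz y₀ (by simp)).1.mp hEwy₀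
      rwa [hey₀] at h
    · intro b hb hba
      have h := (hz b (by simp [hb])).2.mp (hs_sub hb)
      rwa [heb b hb hba] at h
  choose f hf using key
  have hmaps : ∀ a ∈ s, f a ∈ hperp.toFinset := fun a ha => (hf a ha).1
  have hlt : hperp.toFinset.card < s.card := by rw [hs_card]; exact Nat.lt_succ_self _
  obtain ⟨a, ha, b, hb, hab, hfab⟩ :=
    Finset.exists_ne_map_eq_of_card_lt_of_maps_to hlt hmaps
  have h1 : D.E (f a) a := (hf a ha).2.1
  have h2 : D.E a (f b) := (hf b hb).2.2 a ha hab
  rw [← hfab] at h2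
  exact D.not_opposite _ _ h1 h2

end TwoPartiteDigraph


/-- In a homogeneous 2-partite digraph, if a vertex `v` has infinite out- and
in-neighbourhood and finite `v^⊥`, then `v^⊥ = ∅`. -/
theorem stmt_9 {V : Type*} (D : TwoPartiteDigraph V) (hhom : D.Homogeneous) (v : V)
    (hplus : (D.Nplus v).Infinite) (hminus : (D.Nminus v).Infinite)
    (hperp : (D.perp v).Finite) : D.perp v = ∅ := by
  by_contra hne
  obtain ⟨w, hside, hnadj⟩ := Set.nonempty_iff_ne_empty.mpr hne
  rcases hside with ⟨hvX, hwY⟩ | ⟨hvY, hwX⟩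
  · exact aux_main hhom (Or.inl ⟨rfl, rfl⟩) hvX hwY hnadj hplus hminus hperp
  · exact aux_main hhom (Or.inr ⟨rfl, rfl⟩) hvY hwX hnadj hplus hminus hperp
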